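/- arXiv:1202.0337 — 2 statements merged into one kernel-verified Lean document; each statement's English description precedes it below -/
import Mathlib

section
/- Let p = 2f+1 be an odd prime and λ ∈ GF(p) with λ ≠ 0 and λ ≠ 1. Let N(p) be the number of affine points (x,y) ∈ GF(p)² with y² = x(x-1)(x-λ), and set a(p) = p - N(p) (so that a(p) = 1 + p minus the projective point count). Then a(p) ≡ (-1)^((p+1)/2) · (p-1) · Σ_{k=0}^{f} C(f+k,k)·C(f,k)·(-λ)^k (mod p). -/
open Finset

-- sum of n-th powers over ZMod p
lemma aux_sum_pow (p : ℕ) [Fact p.Prime] (n : ℕ) (h0 : 0 < n) (h2 : n < 2 * (p - 1)) :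
    ∑ x : ZMod p, x ^ n = if n = p - 1 then -1 else 0 := by
  have hp : p.Prime := Fact.out
  have hcard : Fintype.card (ZMod p) = p := ZMod.card p
  rcases lt_trichotomy n (p - 1) with h | h | h
  · rw [if_neg h.ne]
    have := FiniteField.sum_pow_lt_card_sub_one (ZMod p) n (by rwa [hcard])
    exact this
  · subst h
    rw [if_pos rfl]
    have hstep : ∑ x : ZMod p, x ^ (p - 1)
        = ∑ x ∈ (Finset.univ.erase (0 : ZMod p)), x ^ (p - 1) + (0 : ZMod p) ^ (p - 1) := by
      rw [Finset.sum_erase_add _ _ (Finset.mem_univ 0)]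
    rw [hstep, zero_pow h0.ne', add_zero]
    rw [Finset.sum_congr rfl (fun x hx => ZMod.pow_card_sub_one_eq_one
      (Finset.ne_of_mem_erase hx))]
    rw [Finset.sum_const, Finset.card_erase_of_mem (Finset.mem_univ 0), Finset.card_univ, hcard]
    have hpcast : ((p : ℕ) : ZMod p) = 0 := ZMod.natCast_self p
    have : ((p - 1 : ℕ) : ZMod p) = -1 := by
      have h1p : 1 ≤ p := hp.one_lt.le
      push_cast [Nat.cast_sub h1p]
      rw [hpcast]; ring
    rw [nsmul_eq_mul, mul_one, this]
  · rw [if_neg h.ne']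
    have key : ∀ x : ZMod p, x ^ n = x ^ (n - (p - 1)) := by
      intro x
      by_cases hx : x = 0
      · subst hx
        rw [zero_pow h0.ne', zero_pow (by omega)]
      · have hn : n = (p - 1) + (n - (p - 1)) := by omega
        conv_lhs => rw [hn]
        rw [pow_add, ZMod.pow_card_sub_one_eq_one hx, one_mul]
    rw [Finset.sum_congr rfl (fun x _ => key x)]
    exact FiniteField.sum_pow_lt_card_sub_one (ZMod p) _ (by rw [hcard]; omega)

-- number of square roots
lemma aux_count_sqrt (p f : ℕ) [Fact p.Prime] (hpf : p = 2 * f + 1) (hf : 0 < f) (c : ZMod p) :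
    (((Finset.univ.filter fun y : ZMod p => y ^ 2 = c).card : ℕ) : ZMod p) = 1 + c ^ f := by
  have hp : p.Prime := Fact.out
  have hchar : ringChar (ZMod p) ≠ 2 := by
    rw [ZMod.ringChar_zmod_n]; omega
  have h2ne : (2 : ZMod p) ≠ 0 := by
    intro h
    have : ((2 : ℕ) : ZMod p) = 0 := by push_cast; exact h
    rw [ZMod.natCast_eq_zero_iff] at this
    have := Nat.le_of_dvd (by norm_num) this
    omega
  rcases eq_or_ne c 0 with rfl | hc
  · have : (Finset.univ.filter fun y : ZMod p => y ^ 2 = (0 : ZMod p)) = {0} := by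
      ext y
      simp [pow_eq_zero_iff]
    rw [this]
    simp [zero_pow hf.ne']
  · have hfd : f = p / 2 := by omega
    by_cases hsq : IsSquare c
    · have hpow : c ^ f = 1 := by
        have h' := (FiniteField.isSquare_iff hchar hc).mp hsq
        rw [ZMod.card p] at h'
        simpa [← hfd] using h'
      obtain ⟨y, hy⟩ := hsq
      have hyne : y ≠ 0 := by rintro rfl; simp at hy; exact hc hy
      have hyneg : y ≠ -y := by
        intro h
        apply hyne
        have : 2 * y = 0 := by linear_combination h
        rcases mul_eq_zero.mp this with h' | h'
        · exact absurd h' h2ne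
        · exact h'
      have hset : (Finset.univ.filter fun z : ZMod p => z ^ 2 = c) = {y, -y} := by
        ext z
        simp only [Finset.mem_filter, Finset.mem_univ, true_and, Finset.mem_insert,
          Finset.mem_singleton]
        constructor
        · intro hz
          have : (z - y) * (z + y) = 0 := by
            have : z ^ 2 = y * y := by rw [hz, hy]
            linear_combination this
          rcases mul_eq_zero.mp this with h' | h'
          · left; exact sub_eq_zero.mp h'
          · right; linear_combination h'
        · rintro (rfl | rfl)
          · rw [hy]; ring
          · rw [hy]; ring
      rw [hset]
      rw [Finset.card_insert_of_notMem (by simpa using hyneg), Finset.card_singleton]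
      rw [hpow]
      norm_num
    · have hpow : c ^ f = -1 := by
        have hd := FiniteField.pow_dichotomy hchar hc
        rw [ZMod.card p, ← hfd] at hd
        rcases hd with h' | h'
        · exfalso
          apply hsq
          apply (FiniteField.isSquare_iff hchar hc).mpr
          rw [ZMod.card p, ← hfd]
          exact h'
        · exact h'
      have hset : (Finset.univ.filter fun z : ZMod p => z ^ 2 = c) = ∅ := by
        ext z
        simp only [Finset.mem_filter, Finset.mem_univ, true_and, Finset.notMem_empty,
          iff_false]
        intro hz
        exact hsq ⟨z, by rw [← hz]; ring⟩
      rw [hset, hpow]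
      simp

lemma aux_choose (p f : ℕ) [Fact p.Prime] (hpf : p = 2 * f + 1) {k : ℕ} (hk : k ≤ f) :
    (((f + k).choose k : ℕ) : ZMod p) = (-1) ^ k * ((f.choose k : ℕ) : ZMod p) := by
  have hp : p.Prime := Fact.out
  have hfact : ((Nat.factorial k : ℕ) : ZMod p) ≠ 0 := by
    rw [Ne, ZMod.natCast_eq_zero_iff]
    intro hdvd
    have := (Nat.Prime.dvd_factorial hp).mp hdvd
    omega
  have key : (((f + k).descFactorial k : ℕ) : ZMod p)
      = (-1) ^ k * ((f.descFactorial k : ℕ) : ZMod p) := by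
    rw [Nat.descFactorial_eq_prod_range, Nat.descFactorial_eq_prod_range]
    push_cast
    calc ∏ i ∈ range k, ((f + k - i : ℕ) : ZMod p)
        = ∏ i ∈ range k, ((-1) * ((f - (k - 1 - i) : ℕ) : ZMod p)) := by
          refine Finset.prod_congr rfl fun i hi => ?_
          rw [Finset.mem_range] at hi
          have hsum : (f + k - i) + (f - (k - 1 - i)) = p := by omega
          have hz : ((f + k - i : ℕ) : ZMod p) + ((f - (k - 1 - i) : ℕ) : ZMod p) = 0 := by
            rw [← Nat.cast_add, hsum, ZMod.natCast_self]
          linear_combination hz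
      _ = (-1) ^ k * ∏ i ∈ range k, ((f - (k - 1 - i) : ℕ) : ZMod p) := by
          rw [Finset.prod_mul_distrib, Finset.prod_const, Finset.card_range]
      _ = (-1) ^ k * ∏ i ∈ range k, ((f - i : ℕ) : ZMod p) := by
          rw [Finset.prod_range_reflect (fun i => ((f - i : ℕ) : ZMod p)) k]
  rw [Nat.descFactorial_eq_factorial_mul_choose, Nat.descFactorial_eq_factorial_mul_choose] at key
  push_cast at key
  apply mul_left_cancel₀ hfact
  rw [key]; ring

theorem stmt_1 (p f : ℕ) [Fact p.Prime] (hpf : p = 2 * f + 1) (hodd : Odd p)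
    (lam : ZMod p) (h0 : lam ≠ 0) (h1 : lam ≠ 1) :
    let N : ℕ := (Finset.univ.filter
      (fun xy : ZMod p × ZMod p => xy.2 ^ 2 = xy.1 * (xy.1 - 1) * (xy.1 - lam))).card
    ((p : ℤ) - N : ℤ) ≡ ((-1 : ℤ) ^ ((p + 1) / 2) * (p - 1) *
      ((∑ k ∈ Finset.range (f + 1),
        ((f + k).choose k : ZMod p) * (f.choose k : ZMod p) * (-lam) ^ k).val : ℤ)) [ZMOD p] := by
  intro N
  have hp : p.Prime := Fact.out
  have hf : 0 < f := by have := hp.two_le; omega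
  rw [← ZMod.intCast_eq_intCast_iff]
  push_cast
  rw [ZMod.natCast_self]
  simp only [ZMod.natCast_val, ZMod.cast_id]
  set S : ZMod p := ∑ k ∈ Finset.range (f + 1),
      ((f + k).choose k : ZMod p) * (f.choose k : ZMod p) * (-lam) ^ k with hS
  -- goal : 0 - N = (-1)^((p+1)/2) * (0 - 1) * S
  have hhalf : (p + 1) / 2 = f + 1 := by omega
  have hSval : S = ∑ k ∈ Finset.range (f + 1), (f.choose k : ZMod p) ^ 2 * lam ^ k := by
    rw [hS]
    refine Finset.sum_congr rfl fun k hk => ?_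
    rw [Finset.mem_range] at hk
    rw [aux_choose p f hpf (by omega)]
    rw [show ((-1 : ZMod p) ^ k * (f.choose k : ZMod p)) * (f.choose k : ZMod p) * (-lam) ^ k
      = (f.choose k : ZMod p) ^ 2 * ((-1) ^ k * (-lam) ^ k) from by ring, ← mul_pow]
    simp
  have hN : (N : ZMod p) = ∑ x : ZMod p, (1 + (x * (x - 1) * (x - lam)) ^ f) := by
    have hN1 : N = ∑ x : ZMod p,
        (Finset.univ.filter fun y : ZMod p => y ^ 2 = x * (x - 1) * (x - lam)).card := by
      show (Finset.univ.filter
          (fun xy : ZMod p × ZMod p => xy.2 ^ 2 = xy.1 * (xy.1 - 1) * (xy.1 - lam))).card = _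
      rw [Finset.card_filter, Fintype.sum_prod_type]
      exact Finset.sum_congr rfl fun x _ => (Finset.card_filter _ _).symm
    rw [hN1]
    push_cast
    exact Finset.sum_congr rfl fun x _ => aux_count_sqrt p f hpf hf _
  have hone : ∑ _x : ZMod p, (1 : ZMod p) = 0 := by
    rw [Finset.sum_const, Finset.card_univ, ZMod.card, nsmul_eq_mul, mul_one, ZMod.natCast_self]
  have hexp : ∀ x : ZMod p, (x * (x - 1) * (x - lam)) ^ f
      = ∑ i ∈ range (f + 1), ∑ j ∈ range (f + 1),
        ((-1) ^ (i + j) * lam ^ (f - j) * (f.choose i : ZMod p) * (f.choose j : ZMod p))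
          * x ^ (f + i + j) := by
    intro x
    rw [mul_pow, mul_pow, sub_pow x 1 f, sub_pow x lam f, mul_assoc, Finset.sum_mul_sum, Finset.mul_sum]
    refine Finset.sum_congr rfl fun i hi => ?_
    rw [Finset.mul_sum]
    refine Finset.sum_congr rfl fun j hj => ?_
    have h1 : (-1 : ZMod p) ^ (i + f) * (-1) ^ (j + f) = (-1) ^ (i + j) := by
      rw [← pow_add, show i + f + (j + f) = (i + j) + 2 * f by ring, pow_add, pow_mul,
        neg_one_sq, one_pow, mul_one]
    rw [← h1, one_pow, pow_add, pow_add]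
    ring
  have hsum : ∑ x : ZMod p, (x * (x - 1) * (x - lam)) ^ f
      = (-1) ^ (f + 1) * ∑ k ∈ Finset.range (f + 1), (f.choose k : ZMod p) ^ 2 * lam ^ k := by
    rw [Finset.sum_congr rfl fun x _ => hexp x, Finset.sum_comm]
    have hinner : ∀ i ∈ range (f + 1),
        (∑ x : ZMod p, ∑ j ∈ range (f + 1),
          ((-1) ^ (i + j) * lam ^ (f - j) * (f.choose i : ZMod p) * (f.choose j : ZMod p))
            * x ^ (f + i + j))
        = (-1) ^ (f + 1) * ((f.choose i : ZMod p) ^ 2 * lam ^ i) := by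
      intro i hi
      rw [Finset.mem_range] at hi
      rw [Finset.sum_comm]
      have hstep : ∀ j ∈ range (f + 1),
          (∑ x : ZMod p, ((-1) ^ (i + j) * lam ^ (f - j) * (f.choose i : ZMod p)
            * (f.choose j : ZMod p)) * x ^ (f + i + j))
          = ((-1) ^ (i + j) * lam ^ (f - j) * (f.choose i : ZMod p) * (f.choose j : ZMod p))
            * (if f + i + j = p - 1 then (-1 : ZMod p) else 0) := by
        intro j hj
        rw [Finset.mem_range] at hj
        rw [← Finset.mul_sum, aux_sum_pow p (f + i + j) (by omega) (by omega)]
      rw [Finset.sum_congr rfl hstep]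
      rw [Finset.sum_eq_single (f - i)]
      · rw [if_pos (by omega)]
        have h2 : i + (f - i) = f := by omega
        have h3 : f - (f - i) = i := by omega
        rw [h2, h3, Nat.choose_symm (by omega), pow_succ]
        ring
      · intro j hj hne
        rw [Finset.mem_range] at hj
        rw [if_neg (by omega), mul_zero]
      · intro h
        exact absurd (Finset.mem_range.mpr (by omega)) h
    rw [Finset.sum_congr rfl hinner, ← Finset.mul_sum]
  rw [hN, Finset.sum_add_distrib, hone, zero_add, hsum, hhalf, hSval]
  ring
end

section
/- Let p = 2f+1 be an odd prime. Then Σ_{k=0}^{f} C(f+k,k)·C(f,k)·(-1)^k·λ^k ≡ Σ_{k=0}^{f} C(2k,k)²·(λ/16)^k (mod p) for every λ ∈ GF(p). -/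
theorem stmt_15 (p f : ℕ) (hp : p.Prime) (hpf : p = 2 * f + 1) (hodd : Odd p)
    (lam : ZMod p) :
    ∑ k ∈ Finset.range (f + 1),
        ((f + k).choose k : ZMod p) * (f.choose k : ZMod p) * (-1) ^ k * lam ^ k
      = ∑ k ∈ Finset.range (f + 1),
        ((2 * k).choose k : ZMod p) ^ 2 * (lam * 16⁻¹) ^ k := by
  haveI : Fact p.Prime := ⟨hp⟩
  have hps : ((2 * f + 1 : ℕ) : ZMod p) = 0 := by rw [← hpf]; exact ZMod.natCast_self p
  have hff : (2 : ZMod p) * (f : ZMod p) + 1 = 0 := by push_cast at hps; linear_combination hps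
  have hfact : ∀ k, k ≤ f → ((k.factorial : ℕ) : ZMod p) ≠ 0 := by
    intro k hk
    rw [Ne, ZMod.natCast_eq_zero_iff]
    intro hdvd
    have := (Nat.Prime.dvd_factorial hp).mp hdvd
    omega
  have hksmall : ∀ k : ℕ, 0 < k → k ≤ f → ((k : ℕ) : ZMod p) ≠ 0 := by
    intro k hk0 hk
    rw [Ne, ZMod.natCast_eq_zero_iff]
    intro hdvd
    have := Nat.le_of_dvd hk0 hdvd
    omega
  -- H1 : descFactorial relation
  have h1 : ∀ k, k ≤ f →
      (((f + k).descFactorial k : ℕ) : ZMod p) = (-1) ^ k * ((f.descFactorial k : ℕ) : ZMod p) := by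
    intro k
    induction k with
    | zero => simp
    | succ k ih =>
      intro hk
      have hfk : f + (k + 1) = (f + k) + 1 := by omega
      rw [hfk, Nat.succ_descFactorial_succ, Nat.descFactorial_succ]
      push_cast [Nat.cast_sub (show k ≤ f by omega)]
      rw [ih (by omega)]
      ring_nf
      linear_combination ((-1 : ZMod p) ^ k * (f.descFactorial k : ZMod p)) * hff
  -- choose relation from h1
  have hA : ∀ k, k ≤ f →
      (((f + k).choose k : ℕ) : ZMod p) = (-1) ^ k * ((f.choose k : ℕ) : ZMod p) := by
    intro k hk
    have h := h1 k hk
    rw [Nat.descFactorial_eq_factorial_mul_choose, Nat.descFactorial_eq_factorial_mul_choose] at h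
    push_cast at h
    apply mul_left_cancel₀ (hfact k hk)
    rw [h]; ring
  -- H2 : central binomial relation
  have h2 : ∀ k, k ≤ f →
      (((2 * k).choose k : ℕ) : ZMod p) = (-4) ^ k * ((f.choose k : ℕ) : ZMod p) := by
    intro k
    induction k with
    | zero => simp
    | succ k ih =>
      intro hk
      have hcb : (k + 1) * (2 * (k + 1)).choose (k + 1) = 2 * (2 * k + 1) * ((2 * k).choose k) := by
        have := Nat.succ_mul_centralBinom_succ k
        simpa [Nat.centralBinom] using this
      have hch : f.choose (k + 1) * (k + 1) = f.choose k * (f - k) :=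
        Nat.choose_succ_right_eq f k
      have hcbz : ((k : ZMod p) + 1) * ((2 * (k + 1)).choose (k + 1) : ℕ) =
          2 * (2 * (k : ZMod p) + 1) * (((2 * k).choose k : ℕ) : ZMod p) := by
        have := congrArg (fun n : ℕ => (n : ZMod p)) hcb
        push_cast at this
        linear_combination this
      have hchz : ((f.choose (k + 1) : ℕ) : ZMod p) * ((k : ZMod p) + 1) =
          ((f.choose k : ℕ) : ZMod p) * ((f : ZMod p) - (k : ZMod p)) := by
        have := congrArg (fun n : ℕ => (n : ZMod p)) hch
        push_cast [Nat.cast_sub (show k ≤ f by omega)] at this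
        linear_combination this
      have hk1 : ((k : ZMod p) + 1) ≠ 0 := by
        have := hksmall (k + 1) (by omega) hk
        push_cast at this
        exact this
      apply mul_left_cancel₀ hk1
      rw [hcbz, ih (by omega)]
      linear_combination (2 * ((-4 : ZMod p)) ^ k * ((f.choose k : ℕ) : ZMod p)) * hff -
        (-4 : ZMod p) ^ (k + 1) * hchz
  -- 16 invertible
  have h16 : (16 : ZMod p) ≠ 0 := by
    have : ((16 : ℕ) : ZMod p) ≠ 0 := by
      rw [Ne, ZMod.natCast_eq_zero_iff]
      intro h
      have h2' : p ∣ 2 := hp.dvd_of_dvd_pow (show p ∣ 2 ^ 4 by norm_num; exact h)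
      have := Nat.le_of_dvd (by norm_num) h2'
      have := hp.two_le
      omega
    simpa using this
  apply Finset.sum_congr rfl
  intro k hk
  have hkf : k ≤ f := by
    have := Finset.mem_range.mp hk
    omega
  rw [hA k hkf, h2 k hkf, mul_pow lam]
  have hneg : ((-1 : ZMod p)) ^ k * (-1) ^ k = 1 := by
    rw [← mul_pow]; norm_num
  have h4 : ((-4 : ZMod p)) ^ k * (-4) ^ k = 16 ^ k := by
    rw [← mul_pow]; norm_num
  have hpw : (16 : ZMod p) ^ k * (16⁻¹) ^ k = 1 := by
    rw [← mul_pow, mul_inv_cancel₀ h16, one_pow]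
  linear_combination (((f.choose k : ℕ) : ZMod p)) ^ 2 * lam ^ k * hneg -
    ((f.choose k : ℕ) : ZMod p) ^ 2 * lam ^ k * ((16⁻¹ : ZMod p) ^ k * h4 + hpw)
end
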